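/- For all natural numbers n and k with n ≥ k ≥ 1, it holds that n^{k−1}·(n−k+1) ≥ (n−3)·Π_{i=n−k+2}^{n} i, where the product over an empty range equals 1 and n−3 denotes truncated subtraction when n < 3. -/

import Mathlib

open Finset

/-- For all natural numbers `n ≥ k ≥ 1`,
`n^{k−1}·(n−k+1) ≥ (n−3)·Π_{i=n−k+2}^{n} i` (natural-number, truncated subtraction). -/
theorem pow_mul_ge_sub_three_mul_prod (n k : ℕ) (hk : 1 ≤ k) (hkn : k ≤ n) :
    (n - 3) * ∏ i ∈ Finset.Icc (n - k + 2) n, i ≤ n ^ (k - 1) * (n - k + 1) := by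
  rcases Nat.lt_or_ge k 3 with hk3 | hk3
  · interval_cases k
    · have h : n - 1 + 2 = n + 1 := by omega
      rw [h, Finset.Icc_eq_empty (by omega)]
      simp
      omega
    · have h : n - 2 + 2 = n := by omega
      rw [h, Finset.Icc_self, Finset.prod_singleton]
      have h1 : n - 3 ≤ n - 2 + 1 := by omega
      calc (n - 3) * n ≤ (n - 2 + 1) * n := Nat.mul_le_mul_right _ h1
        _ = n ^ (2 - 1) * (n - 2 + 1) := by ring
  · -- k ≥ 3
    have hIcc : Finset.Icc (n - k + 2) n = Finset.Ico (n - k + 2) (n + 1) := by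
      rw [Finset.Ico_add_one_right_eq_Icc]
    rw [hIcc]
    rw [Finset.prod_eq_prod_Ico_succ_bot (by omega : n - k + 2 < n + 1)]
    rw [Finset.prod_eq_prod_Ico_succ_bot (by omega : n - k + 2 + 1 < n + 1)]
    set P : ℕ := ∏ i ∈ Finset.Ico (n - k + 2 + 1 + 1) (n + 1), i with hP
    have hPle : P ≤ n ^ (k - 3) := by
      have hcard : (Finset.Ico (n - k + 2 + 1 + 1) (n + 1)).card = k - 3 := by
        rw [Nat.card_Ico]; omega
      calc P ≤ n ^ (Finset.Ico (n - k + 2 + 1 + 1) (n + 1)).card :=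
            Finset.prod_le_pow_card _ _ _ (fun i hi => by
              have := (Finset.mem_Ico.mp hi).2; omega)
        _ = n ^ (k - 3) := by rw [hcard]
    have hpow : n ^ (k - 1) = n ^ (k - 3) * n ^ 2 := by
      rw [← pow_add]; congr 1; omega
    have key : (n - 3) * ((n - k + 2) * (n - k + 2 + 1)) ≤ n ^ 2 * (n - k + 1) := by
      obtain ⟨b, hb⟩ : ∃ b, n = b + 3 := ⟨n - 3, by omega⟩
      obtain ⟨a, ha⟩ : ∃ a, n - k = a := ⟨n - k, rfl⟩
      have e1 : n - 3 = b := by omega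
      have e2 : n - k + 2 = a + 2 := by omega
      have e3 : n - k + 1 = a + 1 := by omega
      rw [e1, e2, e3, hb]
      have hab : a ≤ b := by omega
      nlinarith [Nat.mul_le_mul_right (a * b) hab]
    calc (n - 3) * ((n - k + 2) * ((n - k + 2 + 1) * P))
        ≤ (n - 3) * ((n - k + 2) * ((n - k + 2 + 1) * n ^ (k - 3))) := by
          exact Nat.mul_le_mul_left _ (Nat.mul_le_mul_left _ (Nat.mul_le_mul_left _ hPle))
      _ = ((n - 3) * ((n - k + 2) * (n - k + 2 + 1))) * n ^ (k - 3) := by ring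
      _ ≤ (n ^ 2 * (n - k + 1)) * n ^ (k - 3) := Nat.mul_le_mul_right _ key
      _ = n ^ (k - 1) * (n - k + 1) := by rw [hpow]; ring
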